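/- The constant term (coefficient of x_0^0 ··· x_{n-1}^0) in the Laurent polynomial ∏_{i ≠ j} (1 − x_i/x_j) equals n!. -/

import Mathlib

open MvPolynomial Finset Equiv

namespace DysonAux

variable {n : ℕ} {M : Type*} [CommMonoid M]

lemma prod_filter_lt (g : Fin n × Fin n → M) :
    ∏ p ∈ univ.filter (fun p : Fin n × Fin n => p.1 < p.2), g p
      = ∏ i, ∏ j ∈ Ioi i, g (i, j) := by
  rw [Finset.prod_filter, Fintype.prod_prod_type]
  refine Finset.prod_congr rfl fun i _ => ?_
  rw [← Finset.prod_filter]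
  congr 1
  ext j
  simp

lemma prod_offdiag (f : Fin n → Fin n → M) :
    ∏ p ∈ univ.filter (fun p : Fin n × Fin n => p.1 ≠ p.2), f p.1 p.2
      = (∏ i, ∏ j ∈ Ioi i, f i j) * (∏ i, ∏ j ∈ Ioi i, f j i) := by
  have hset : univ.filter (fun p : Fin n × Fin n => p.1 ≠ p.2)
      = univ.filter (fun p : Fin n × Fin n => p.1 < p.2)
        ∪ univ.filter (fun p : Fin n × Fin n => p.2 < p.1) := by
    ext p
    simp only [Finset.mem_filter, Finset.mem_univ, true_and, Finset.mem_union]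
    exact ne_iff_lt_or_gt
  have hdisj : Disjoint (univ.filter (fun p : Fin n × Fin n => p.1 < p.2))
      (univ.filter (fun p : Fin n × Fin n => p.2 < p.1)) := by
    simp only [Finset.disjoint_left, Finset.mem_filter]
    rintro p ⟨-, h1⟩ ⟨-, h2⟩
    exact absurd h2 (lt_asymm h1)
  rw [hset, Finset.prod_union hdisj]
  congr 1
  · exact prod_filter_lt _
  · rw [← prod_filter_lt (fun p => f p.2 p.1)]
    refine Finset.prod_nbij' Prod.swap Prod.swap ?_ ?_ ?_ ?_ ?_
    · intro p hp; simp only [Finset.mem_filter, Finset.mem_univ, true_and] at hp ⊢; exact hp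
    · intro p hp; simp only [Finset.mem_filter, Finset.mem_univ, true_and] at hp ⊢; exact hp
    · intro p _; exact Prod.swap_swap p
    · intro p _; exact Prod.swap_swap p
    · intro p _; rfl

lemma prod_Ioi_rev (g : Fin n → Fin n → M) :
    ∏ i, ∏ j ∈ Ioi i, g (Fin.rev i) (Fin.rev j) = ∏ i, ∏ j ∈ Ioi i, g j i := by
  rw [← prod_filter_lt (fun p => g (Fin.rev p.1) (Fin.rev p.2)),
    ← prod_filter_lt (fun p => g p.2 p.1)]
  refine Finset.prod_nbij' (fun p => (p.2.rev, p.1.rev)) (fun p => (p.2.rev, p.1.rev))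
    ?_ ?_ ?_ ?_ ?_
  · intro p hp; simp only [Finset.mem_filter, Finset.mem_univ, true_and] at hp ⊢
    exact Fin.rev_lt_rev.mpr hp
  · intro p hp; simp only [Finset.mem_filter, Finset.mem_univ, true_and] at hp ⊢
    exact Fin.rev_lt_rev.mpr hp
  · intro p _; simp [Fin.rev_rev]
  · intro p _; simp [Fin.rev_rev]
  · intro p _; simp [Fin.rev_rev]

lemma prod_X_pow_univ (d : Fin n → ℕ) :
    ∏ k, (X k : MvPolynomial (Fin n) ℤ) ^ d k
      = monomial (Finsupp.equivFunOnFinite.symm d) 1 := by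
  rw [← MvPolynomial.prod_X_pow_eq_monomial]
  refine (Finset.prod_subset (Finset.subset_univ _) fun x _ hx => ?_).symm
  have h0 : d x = 0 := Finsupp.notMem_support_iff.mp hx
  rw [h0, pow_zero]

lemma prod_X_pow_perm (e : Equiv.Perm (Fin n)) :
    ∏ i, (X (e i) : MvPolynomial (Fin n) ℤ) ^ (i : ℕ)
      = monomial (Finsupp.equivFunOnFinite.symm fun k => ((e.symm k : Fin n) : ℕ)) 1 := by
  rw [← prod_X_pow_univ]
  rw [← Equiv.prod_comp e (fun k => (X k : MvPolynomial (Fin n) ℤ) ^ ((e.symm k : Fin n) : ℕ))]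
  simp

lemma prod_X_pow_perm_rev (τ : Equiv.Perm (Fin n)) :
    ∏ i, (X (Fin.rev (τ i)) : MvPolynomial (Fin n) ℤ) ^ (i : ℕ)
      = monomial (Finsupp.equivFunOnFinite.symm
          fun k => ((τ.symm (Fin.rev k) : Fin n) : ℕ)) 1 := by
  have h := prod_X_pow_perm (n := n) (τ.trans Fin.revPerm)
  simpa [Equiv.trans_apply, Equiv.symm_trans_apply] using h

lemma cond_iff (σ τ : Equiv.Perm (Fin n)) :
    (Finsupp.equivFunOnFinite.symm fun k => ((σ.symm k : Fin n) : ℕ))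
        + (Finsupp.equivFunOnFinite.symm fun k => ((τ.symm (Fin.rev k) : Fin n) : ℕ))
      = Finsupp.equivFunOnFinite.symm (fun _ : Fin n => n - 1)
    ↔ τ = Fin.revPerm * σ * Fin.revPerm := by
  constructor
  · intro h
    have h' : ∀ k : Fin n, ((σ.symm k : ℕ)) + ((τ.symm (Fin.rev k) : ℕ)) = n - 1 := by
      intro k
      have := DFunLike.congr_fun h k
      simpa using this
    have hsymm : τ.symm = (Fin.revPerm * σ * Fin.revPerm : Equiv.Perm (Fin n)).symm := by
      ext x
      have hx := h' x.rev
      rw [Fin.rev_rev] at hx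
      have hlt1 : ((σ.symm x.rev : Fin n) : ℕ) < n := (σ.symm x.rev).isLt
      have hlt2 : ((τ.symm x : Fin n) : ℕ) < n := (τ.symm x).isLt
      have hr : ((Fin.revPerm * σ * Fin.revPerm : Equiv.Perm (Fin n)).symm x)
          = Fin.rev (σ.symm (Fin.rev x)) := by
        simp [Equiv.Perm.mul_def]
      rw [hr]
      rw [Fin.val_rev]
      omega
    have := congrArg Equiv.symm hsymm
    simpa using this
  · rintro rfl
    ext k
    have h1 : ((Fin.revPerm * σ * Fin.revPerm : Equiv.Perm (Fin n)).symm (Fin.rev k))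
        = Fin.rev (σ.symm k) := by
      simp [Equiv.Perm.mul_def, Equiv.symm_trans_apply]
    simp only [Finsupp.add_apply, Finsupp.coe_equivFunOnFinite_symm, h1, Fin.val_rev]
    have := (σ.symm k).isLt
    omega

end DysonAux

open DysonAux in
theorem dyson_equal_parameters (n : ℕ) :
    MvPolynomial.coeff (Finsupp.equivFunOnFinite.symm fun _ : Fin n => n - 1)
        (∏ p ∈ Finset.univ.filter (fun p : Fin n × Fin n => p.1 ≠ p.2),
          (MvPolynomial.X p.2 - MvPolynomial.X p.1 : MvPolynomial (Fin n) ℤ)) =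
      (n.factorial : ℤ) := by
  classical
  have hsplit :
      (∏ p ∈ Finset.univ.filter (fun p : Fin n × Fin n => p.1 ≠ p.2),
          (MvPolynomial.X p.2 - MvPolynomial.X p.1 : MvPolynomial (Fin n) ℤ))
        = (Matrix.vandermonde fun i : Fin n => (X i : MvPolynomial (Fin n) ℤ)).det
          * (Matrix.vandermonde fun i : Fin n => (X (Fin.rev i) : MvPolynomial (Fin n) ℤ)).det := by
    rw [Matrix.det_vandermonde, Matrix.det_vandermonde,
      prod_Ioi_rev (fun a b : Fin n => (X b - X a : MvPolynomial (Fin n) ℤ))]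
    exact prod_offdiag (fun a b : Fin n => (X b - X a : MvPolynomial (Fin n) ℤ))
  rw [hsplit, Matrix.det_apply, Matrix.det_apply]
  simp only [Matrix.vandermonde_apply]
  have hA : ∀ σ : Equiv.Perm (Fin n),
      ∏ i, (X (σ i) : MvPolynomial (Fin n) ℤ) ^ (i : ℕ)
        = monomial (Finsupp.equivFunOnFinite.symm fun k => ((σ.symm k : Fin n) : ℕ)) 1 :=
    prod_X_pow_perm
  have hB : ∀ τ : Equiv.Perm (Fin n),
      ∏ i, (X (Fin.rev (τ i)) : MvPolynomial (Fin n) ℤ) ^ (i : ℕ)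
        = monomial (Finsupp.equivFunOnFinite.symm
            fun k => ((τ.symm (Fin.rev k) : Fin n) : ℕ)) 1 :=
    prod_X_pow_perm_rev
  simp only [hA, hB]
  rw [Finset.sum_mul_sum]
  rw [MvPolynomial.coeff_sum]
  have key : ∀ σ : Equiv.Perm (Fin n),
      MvPolynomial.coeff (Finsupp.equivFunOnFinite.symm fun _ : Fin n => n - 1)
        (∑ τ : Equiv.Perm (Fin n),
          (Equiv.Perm.sign σ •
              (monomial (Finsupp.equivFunOnFinite.symm fun k => ((σ.symm k : Fin n) : ℕ))
                (1 : ℤ))) *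
            (Equiv.Perm.sign τ •
              (monomial (Finsupp.equivFunOnFinite.symm
                  fun k => ((τ.symm (Fin.rev k) : Fin n) : ℕ)) (1 : ℤ)))) = 1 := by
    intro σ
    rw [MvPolynomial.coeff_sum]
    have hterm : ∀ τ : Equiv.Perm (Fin n),
        MvPolynomial.coeff (Finsupp.equivFunOnFinite.symm fun _ : Fin n => n - 1)
          ((Equiv.Perm.sign σ •
              (monomial (Finsupp.equivFunOnFinite.symm fun k => ((σ.symm k : Fin n) : ℕ))
                (1 : ℤ))) *
            (Equiv.Perm.sign τ •
              (monomial (Finsupp.equivFunOnFinite.symm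
                  fun k => ((τ.symm (Fin.rev k) : Fin n) : ℕ)) (1 : ℤ))))
        = if τ = Fin.revPerm * σ * Fin.revPerm
            then ((Equiv.Perm.sign σ : ℤ) * (Equiv.Perm.sign τ : ℤ)) else 0 := by
      intro τ
      rw [Units.smul_def, Units.smul_def, smul_mul_smul_comm, MvPolynomial.monomial_mul,
        MvPolynomial.coeff_smul, MvPolynomial.coeff_monomial, mul_one]
      simp only [cond_iff σ τ]
      simp [smul_eq_mul, mul_ite]
    rw [Finset.sum_congr rfl fun τ _ => hterm τ]
    rw [Finset.sum_ite_eq' Finset.univ (Fin.revPerm * σ * Fin.revPerm)]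
    rw [if_pos (Finset.mem_univ _)]
    have hs : Equiv.Perm.sign (Fin.revPerm * σ * Fin.revPerm : Equiv.Perm (Fin n))
        = Equiv.Perm.sign σ := by
      rw [map_mul, map_mul,
        mul_comm (Equiv.Perm.sign (Fin.revPerm : Equiv.Perm (Fin n))) (Equiv.Perm.sign σ),
        mul_assoc, Int.units_mul_self, mul_one]
    rw [hs]
    rw [← Units.val_mul, Int.units_mul_self, Units.val_one]
  rw [Finset.sum_congr rfl fun σ _ => key σ]
  simp [Finset.card_univ, Fintype.card_perm]
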